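/- arXiv:2208.02988 — 2 statements merged into one kernel-verified Lean document; each statement's English description precedes it below -/
import Mathlib

section
/- For every k ≥ 2 and n ≥ 2k+3, the spectral radius of the complete split graph satisfies ρ(S_{n,2k−1}) ≥ √((2k−1)n). -/
open Finset Matrix

/-- `G` contains `k` pairwise vertex-disjoint cycles. -/
def HasNDisjointCycles {V : Type*} (G : SimpleGraph V) (k : ℕ) : Prop :=
  ∃ (v : Fin k → V) (w : ∀ i : Fin k, G.Walk (v i) (v i)),
    (∀ i, (w i).IsCycle) ∧
    ∀ i j : Fin k, i ≠ j → ∀ y, y ∈ (w i).support → y ∉ (w j).support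

/-- The complete split graph on `n` vertices: the join of a clique on the first `r`
vertices with an independent set on the remaining `n - r` vertices. -/
def completeSplitGraph (n r : ℕ) : SimpleGraph (Fin n) where
  Adj u v := u ≠ v ∧ ((u : ℕ) < r ∨ (v : ℕ) < r)
  symm := ⟨fun u v h => ⟨h.1.symm, h.2.symm⟩⟩
  loopless := ⟨fun u h => h.1 rfl⟩

instance (n r : ℕ) : DecidableRel (completeSplitGraph n r).Adj :=
  fun u v => inferInstanceAs (Decidable (u ≠ v ∧ ((u : ℕ) < r ∨ (v : ℕ) < r)))

/-- The spectral radius of a finite simple graph: the largest eigenvalue of its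
adjacency matrix, i.e. the supremum of its (real) eigenvalues. -/
noncomputable def graphSpectralRadius {V : Type*} [Fintype V] (G : SimpleGraph V)
    [DecidableRel G.Adj] : ℝ :=
  sSup {μ : ℝ | ∃ f : V → ℝ, f ≠ 0 ∧ G.adjMatrix ℝ *ᵥ f = μ • f}

/-- `eAB G A B` is the number of ordered pairs `(u, w) ∈ A × B` with `uw` an edge of `G`. -/
noncomputable def eAB {V : Type*} (G : SimpleGraph V) (A B : Set V) : ℕ :=
  {p : V × V | p.1 ∈ A ∧ p.2 ∈ B ∧ G.Adj p.1 p.2}.ncard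

/-- `eIn G S` is the number of edges of `G` with both endpoints in `S`. -/
noncomputable def eIn {V : Type*} (G : SimpleGraph V) (S : Set V) : ℕ :=
  {e : Sym2 V | e ∈ G.edgeSet ∧ ∀ v ∈ e, v ∈ S}.ncard

lemma aux_range_sum (n r : ℕ) (hrn : r ≤ n) (a b : ℝ) :
    ∑ i ∈ Finset.range n, (if i < r then a else b) = r • a + (n - r) • b := by
  rw [Finset.range_eq_Ico, ← Finset.sum_Ico_consecutive _ (Nat.zero_le r) hrn]
  rw [Finset.sum_congr rfl (fun i hi => if_pos (Finset.mem_Ico.mp hi).2),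
      Finset.sum_congr rfl (g := fun _ => b) (fun i hi => if_neg (by
        have := (Finset.mem_Ico.mp hi).1; omega))]
  simp [Nat.card_Ico]

lemma aux_bddAbove {n : ℕ} (G : SimpleGraph (Fin n)) [DecidableRel G.Adj] :
    BddAbove {μ : ℝ | ∃ f : Fin n → ℝ, f ≠ 0 ∧ G.adjMatrix ℝ *ᵥ f = μ • f} := by
  refine ⟨n, ?_⟩
  rintro μ ⟨f, hf0, hf⟩
  obtain ⟨w, hw⟩ := Function.ne_iff.mp hf0
  obtain ⟨v, -, hv⟩ := Finset.exists_max_image univ (fun x => |f x|) ⟨w, mem_univ w⟩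
  have hfv : 0 < |f v| := lt_of_lt_of_le (abs_pos.mpr hw) (hv w (mem_univ w))
  have h1 : μ * f v = ∑ u ∈ G.neighborFinset v, f u := by
    have h := congrFun hf v
    rw [SimpleGraph.adjMatrix_mulVec_apply] at h
    simpa using h.symm
  have h2 : |μ| * |f v| ≤ n * |f v| := by
    rw [← abs_mul, h1]
    calc |∑ u ∈ G.neighborFinset v, f u| ≤ ∑ u ∈ G.neighborFinset v, |f u| :=
        Finset.abs_sum_le_sum_abs _ _
      _ ≤ (G.neighborFinset v).card • |f v| :=
        Finset.sum_le_card_nsmul _ _ _ (fun u _ => hv u (mem_univ u))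
      _ ≤ n * |f v| := by
        rw [nsmul_eq_mul]
        gcongr
        exact_mod_cast le_trans (Finset.card_le_univ _) (by simp)
  exact le_trans (le_abs_self μ) (le_of_mul_le_mul_right h2 hfv)

lemma aux_sqrt (R nn : ℝ) (hR3 : (3:ℝ) ≤ R) (hnR : R + 4 ≤ nn) :
    Real.sqrt (R * nn) ≤ ((R - 1) + Real.sqrt ((R - 1) ^ 2 + 4 * R * (nn - R))) / 2 := by
  set s : ℝ := Real.sqrt ((R - 1) ^ 2 + 4 * R * (nn - R)) with hsdef
  have hs0 : 0 ≤ s := Real.sqrt_nonneg _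
  have hs2 : s ^ 2 = (R - 1) ^ 2 + 4 * R * (nn - R) := by
    rw [hsdef, Real.sq_sqrt (by nlinarith)]
  have hμ0 : 0 ≤ ((R - 1) + s) / 2 := by linarith
  have key1 : (R ^ 2 + 2 * R - 1) ^ 2 ≤ ((R - 1) * s) ^ 2 := by
    have h1 : ((R - 1) * s) ^ 2 = (R - 1) ^ 2 * s ^ 2 := by ring
    rw [h1, hs2]
    nlinarith [mul_nonneg (mul_nonneg (by linarith : (0:ℝ) ≤ 4 * R)
      (by nlinarith : (0:ℝ) ≤ (R-1)^2)) (by linarith : (0:ℝ) ≤ nn - R - 4)]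
  have key2 : R ^ 2 + 2 * R - 1 ≤ (R - 1) * s := by
    nlinarith [key1, mul_nonneg (by linarith : (0:ℝ) ≤ R - 1) hs0]
  have hkey : R * nn ≤ (((R - 1) + s) / 2) ^ 2 := by nlinarith [key2, hs2]
  calc Real.sqrt (R * nn) ≤ Real.sqrt ((((R - 1) + s) / 2) ^ 2) := Real.sqrt_le_sqrt hkey
    _ = _ := Real.sqrt_sq hμ0

lemma aux_quad (R nn : ℝ) (h : 0 ≤ (R - 1) ^ 2 + 4 * R * (nn - R)) :
    (((R - 1) + Real.sqrt ((R - 1) ^ 2 + 4 * R * (nn - R))) / 2) ^ 2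
      = (R - 1) * (((R - 1) + Real.sqrt ((R - 1) ^ 2 + 4 * R * (nn - R))) / 2)
        + R * (nn - R) := by
  have hs2 := Real.sq_sqrt h
  linear_combination hs2 / 4

lemma aux_eig (n r : ℕ) (hr : 1 ≤ r) (hrn : r + 1 ≤ n) (μ : ℝ)
    (hquad : μ ^ 2 = ((r : ℝ) - 1) * μ + (r : ℝ) * ((n : ℝ) - (r : ℝ))) :
    (completeSplitGraph n r).adjMatrix ℝ *ᵥ (fun v : Fin n => if (v : ℕ) < r then μ else (r : ℝ))
      = μ • (fun v : Fin n => if (v : ℕ) < r then μ else (r : ℝ)) := by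
  set f : Fin n → ℝ := fun v => if (v : ℕ) < r then μ else (r : ℝ) with hfdef
  have hcastnr : ((n - r : ℕ) : ℝ) = (n : ℝ) - (r : ℝ) := Nat.cast_sub (by omega)
  funext v
  rw [SimpleGraph.adjMatrix_mulVec_apply, SimpleGraph.neighborFinset_eq_filter,
    Finset.sum_filter]
  simp only [Pi.smul_apply, smul_eq_mul]
  by_cases hv : (v : ℕ) < r
  · have hstep : ∀ u : Fin n, (if (completeSplitGraph n r).Adj v u then f u else 0)
        = f u - (if u = v then f u else 0) := by
      intro u
      by_cases huv : u = v
      · subst huv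
        rw [if_neg (completeSplitGraph n r).irrefl, if_pos rfl]; ring
      · rw [if_pos ⟨fun h => huv h.symm, Or.inl hv⟩, if_neg huv]; ring
    rw [Finset.sum_congr rfl (fun u _ => hstep u), Finset.sum_sub_distrib,
      Finset.sum_ite_eq' univ v f, if_pos (mem_univ v)]
    have hT : ∑ u : Fin n, f u = r • μ + (n - r) • (r : ℝ) := by
      rw [hfdef]
      rw [Fin.sum_univ_eq_sum_range (fun i => if i < r then μ else (r : ℝ)) n]
      exact aux_range_sum n r (by omega) μ (r : ℝ)
    have hfv : f v = μ := if_pos hv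
    rw [hT, hfv, nsmul_eq_mul, nsmul_eq_mul, hcastnr]
    linear_combination -hquad
  · have hstep : ∀ u : Fin n, (if (completeSplitGraph n r).Adj v u then f u else 0)
        = (if (u : ℕ) < r then μ else 0) := by
      intro u
      by_cases hu : (u : ℕ) < r
      · rw [if_pos ⟨fun h => hv (h ▸ hu), Or.inr hu⟩]
        simp only [hfdef]
        rw [if_pos hu, if_pos hu]
      · rw [if_neg, if_neg hu]
        rintro ⟨-, h | h⟩ <;> [exact hv h; exact hu h]
    rw [Finset.sum_congr rfl (fun u _ => hstep u)]
    rw [Fin.sum_univ_eq_sum_range (fun i => if i < r then μ else 0) n,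
      aux_range_sum n r (by omega) μ 0]
    have hfv : f v = (r : ℝ) := if_neg hv
    rw [hfv, nsmul_eq_mul]
    simp only [smul_zero, nsmul_eq_mul, mul_zero, add_zero]
    ring

theorem stmt4 (k n : ℕ) (hk : 2 ≤ k) (hn : 2 * k + 3 ≤ n) :
    Real.sqrt ((2 * (k : ℝ) - 1) * n) ≤ graphSpectralRadius (completeSplitGraph n (2 * k - 1)) := by
  have hr3 : 3 ≤ 2 * k - 1 := by omega
  have hrn : (2 * k - 1) + 4 ≤ n := by omega
  have hcast : ((2 * k - 1 : ℕ) : ℝ) = 2 * (k : ℝ) - 1 := by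
    rw [Nat.cast_sub (by omega)]; push_cast; ring
  have hR3 : (3 : ℝ) ≤ ((2 * k - 1 : ℕ) : ℝ) := by exact_mod_cast hr3
  have hnR : ((2 * k - 1 : ℕ) : ℝ) + 4 ≤ (n : ℝ) := by exact_mod_cast hrn
  set R : ℝ := ((2 * k - 1 : ℕ) : ℝ)
  set μ : ℝ := ((R - 1) + Real.sqrt ((R - 1) ^ 2 + 4 * R * ((n : ℝ) - R))) / 2 with hμdef
  have hquad : μ ^ 2 = (R - 1) * μ + R * ((n : ℝ) - R) :=
    aux_quad R (n : ℝ) (by nlinarith)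
  have hf0 : (fun v : Fin n => if (v : ℕ) < 2 * k - 1 then μ else R) ≠ 0 := by
    intro h
    have h2 := congrFun h ⟨2 * k - 1, by omega⟩
    simp only [Pi.zero_apply] at h2
    rw [if_neg (by simp)] at h2
    linarith
  have hmem : μ ∈ {μ : ℝ | ∃ g : Fin n → ℝ, g ≠ 0 ∧
      (completeSplitGraph n (2 * k - 1)).adjMatrix ℝ *ᵥ g = μ • g} :=
    ⟨_, hf0, aux_eig n (2 * k - 1) (by omega) (by omega) μ hquad⟩
  calc Real.sqrt ((2 * (k : ℝ) - 1) * n) = Real.sqrt (R * n) := by rw [hcast]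
    _ ≤ μ := aux_sqrt R (n : ℝ) hR3 hnR
    _ ≤ graphSpectralRadius (completeSplitGraph n (2 * k - 1)) :=
        le_csSup (aux_bddAbove _) hmem
end

section
/- Let k ≥ 2 and n ≥ 2k+3, and let G* be an n-vertex graph containing no k independent cycles whose spectral radius ρ = ρ(G*) is maximum among all n-vertex graphs containing no k independent cycles. Then ρ ≥ √((2k−1)n). -/
open Finset Matrix

-- dart uniqueness lemmas for a cycle
lemma cyc_snd_unique {V : Type*} {G : SimpleGraph V} {v : V} {w : G.Walk v v}
    (hw : w.IsCycle) {d1 d2 : G.Dart} (h1 : d1 ∈ w.darts) (h2 : d2 ∈ w.darts)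
    (h : d1.snd = d2.snd) : d1 = d2 := by
  have hn : (w.darts.map (·.snd)).Nodup := by
    rw [SimpleGraph.Walk.map_snd_darts]; exact hw.support_nodup
  exact List.inj_on_of_nodup_map hn h1 h2 h

lemma cyc_dropLast_nodup {V : Type*} {G : SimpleGraph V} {v : V} {w : G.Walk v v}
    (hw : w.IsCycle) : w.support.dropLast.Nodup := by
  have h3 := hw.three_le_length
  have hs : w.support = v :: w.support.tail := w.support_eq_cons
  have htne : w.support.tail ≠ [] := by
    have hl : w.support.tail.length = w.length := by
      rw [List.length_tail, SimpleGraph.Walk.length_support]; omega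
    intro h
    rw [h] at hl
    simp at hl
    omega
  have hlast : w.support.tail.getLast htne = v := by
    rw [List.getLast_tail]
    exact SimpleGraph.Walk.getLast_support w
  have hdecomp := List.dropLast_append_getLast htne
  rw [hlast] at hdecomp
  have hnd : w.support.tail.Nodup := hw.support_nodup
  have hvd : v ∉ w.support.tail.dropLast := by
    intro hv
    rw [← hdecomp] at hnd
    exact (List.disjoint_of_nodup_append hnd) hv (by simp)
  rw [hs]
  rw [List.dropLast_cons_of_ne_nil htne]
  exact List.nodup_cons.mpr ⟨hvd, hnd.sublist (List.dropLast_sublist _)⟩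

lemma cyc_fst_unique {V : Type*} {G : SimpleGraph V} {v : V} {w : G.Walk v v}
    (hw : w.IsCycle) {d1 d2 : G.Dart} (h1 : d1 ∈ w.darts) (h2 : d2 ∈ w.darts)
    (h : d1.fst = d2.fst) : d1 = d2 := by
  have hn : (w.darts.map (·.fst)).Nodup := by
    rw [SimpleGraph.Walk.map_fst_darts]; exact cyc_dropLast_nodup hw
  exact List.inj_on_of_nodup_map hn h1 h2 h

lemma cyc_two_small {n r : ℕ} {v : Fin n} {w : (completeSplitGraph n r).Walk v v}
    (hw : w.IsCycle) :
    2 ≤ ((w.support.toFinset).filter (fun x : Fin n => (x : ℕ) < r)).card := by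
  set S := (w.support.toFinset).filter (fun x : Fin n => (x : ℕ) < r) with hS
  by_contra hlt
  push_neg at hlt
  have hcard1 : S.card ≤ 1 := by omega
  have hdmem : ∀ d ∈ w.darts, d.fst ∈ S ∨ d.snd ∈ S := by
    intro d hd
    have h1 := SimpleGraph.Walk.dart_fst_mem_support_of_mem_darts w hd
    have h2 := SimpleGraph.Walk.dart_snd_mem_support_of_mem_darts w hd
    have hadj : (d.fst : ℕ) < r ∨ (d.snd : ℕ) < r := d.adj.2
    rcases hadj with h | h
    · exact Or.inl (by simp [hS, List.mem_toFinset, h1, h])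
    · exact Or.inr (by simp [hS, List.mem_toFinset, h2, h])
  have hne : w.darts ≠ [] := by
    have := SimpleGraph.Walk.length_darts w
    have h3 := hw.three_le_length
    intro h; rw [h] at this; simp at this; omega
  obtain ⟨d0, hd0⟩ := List.exists_mem_of_ne_nil _ hne
  obtain ⟨v0, hv0⟩ : ∃ v0, v0 ∈ S := by
    rcases hdmem d0 hd0 with h | h
    exacts [⟨_, h⟩, ⟨_, h⟩]
  have hSone : ∀ x ∈ S, x = v0 := fun x hx => Finset.card_le_one.mp hcard1 x hx v0 hv0
  have hnd : w.darts.Nodup := by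
    have : (w.darts.map (·.snd)).Nodup := by
      rw [SimpleGraph.Walk.map_snd_darts]; exact hw.support_nodup
    exact this.of_map _
  set D := w.darts.toFinset with hD
  have hDcard : 3 ≤ D.card := by
    rw [hD, List.toFinset_card_of_nodup hnd, SimpleGraph.Walk.length_darts]
    exact hw.three_le_length
  have hsub : D ⊆ D.filter (fun d => d.fst = v0) ∪ D.filter (fun d => d.snd = v0) := by
    intro d hd
    have hd' : d ∈ w.darts := List.mem_toFinset.mp hd
    rcases hdmem d hd' with h | h
    · exact Finset.mem_union_left _ (Finset.mem_filter.mpr ⟨hd, hSone _ h⟩)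
    · exact Finset.mem_union_right _ (Finset.mem_filter.mpr ⟨hd, hSone _ h⟩)
  have h1 : (D.filter (fun d => d.fst = v0)).card ≤ 1 := by
    apply Finset.card_le_one.mpr
    intro a ha b hb
    rw [Finset.mem_filter] at ha hb
    exact cyc_fst_unique hw (List.mem_toFinset.mp ha.1) (List.mem_toFinset.mp hb.1)
      (ha.2.trans hb.2.symm)
  have h2 : (D.filter (fun d => d.snd = v0)).card ≤ 1 := by
    apply Finset.card_le_one.mpr
    intro a ha b hb
    rw [Finset.mem_filter] at ha hb
    exact cyc_snd_unique hw (List.mem_toFinset.mp ha.1) (List.mem_toFinset.mp hb.1)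
      (ha.2.trans hb.2.symm)
  have hle := (Finset.card_le_card hsub).trans (Finset.card_union_le _ _)
  omega

lemma card_small (n r : ℕ) : ((univ : Finset (Fin n)).filter
    (fun x : Fin n => (x : ℕ) < r)).card ≤ r := by
  have := Finset.card_le_card_of_injOn
    (s := (univ : Finset (Fin n)).filter (fun x : Fin n => (x : ℕ) < r))
    (t := Finset.range r)
    (fun x : Fin n => (x : ℕ))
    (fun x hx => Finset.mem_range.mpr (Finset.mem_filter.mp hx).2)
    (fun x _ y _ h => Fin.val_injective h)
  simpa using this

lemma split_no_cycles (n k : ℕ) (hk : 1 ≤ k) :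
    ¬ HasNDisjointCycles (completeSplitGraph n (2 * k - 1)) k := by
  rintro ⟨c, W, hcyc, hdisj⟩
  set S : Fin k → Finset (Fin n) :=
    fun i => ((W i).support.toFinset).filter (fun x : Fin n => (x : ℕ) < (2*k-1)) with hS
  have h2 : ∀ i, 2 ≤ (S i).card := fun i => cyc_two_small (hcyc i)
  have hdisjS : ∀ x ∈ (univ : Finset (Fin k)), ∀ y ∈ (univ : Finset (Fin k)),
      x ≠ y → Disjoint (S x) (S y) := by
    intro i _ j _ hij
    rw [Finset.disjoint_left]
    intro a ha haj
    have hai : a ∈ (W i).support := List.mem_toFinset.mp (Finset.mem_filter.mp ha).1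
    have haj' : a ∈ (W j).support := List.mem_toFinset.mp (Finset.mem_filter.mp haj).1
    exact hdisj i j hij a hai haj'
  have hcard := Finset.card_biUnion hdisjS
  have hsub : (univ : Finset (Fin k)).biUnion S ⊆
      (univ : Finset (Fin n)).filter (fun x : Fin n => (x : ℕ) < (2*k-1)) := by
    intro a ha
    obtain ⟨i, _, hai⟩ := Finset.mem_biUnion.mp ha
    exact Finset.mem_filter.mpr ⟨Finset.mem_univ _, (Finset.mem_filter.mp hai).2⟩
  have h1 := Finset.card_le_card hsub
  have h3 := card_small n (2*k-1)
  have h4 : 2 * k ≤ ∑ i : Fin k, (S i).card := by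
    calc 2 * k = ∑ _i : Fin k, 2 := by simp [mul_comm]
    _ ≤ ∑ i : Fin k, (S i).card := Finset.sum_le_sum (fun i _ => h2 i)
  omega

lemma eig_bdd (n : ℕ) (G : SimpleGraph (Fin n)) [DecidableRel G.Adj] :
    BddAbove {μ : ℝ | ∃ f : Fin n → ℝ, f ≠ 0 ∧ G.adjMatrix ℝ *ᵥ f = μ • f} := by
  refine ⟨n, ?_⟩
  rintro μ ⟨f, hf0, hf⟩
  obtain ⟨x, hx⟩ := Function.ne_iff.mp hf0
  obtain ⟨u, -, hu⟩ := Finset.exists_max_image (univ : Finset (Fin n))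
    (fun y => |f y|) ⟨x, Finset.mem_univ x⟩
  have hu' : ∀ y, |f y| ≤ |f u| := fun y => hu y (Finset.mem_univ y)
  have hfu : 0 < |f u| := lt_of_lt_of_le (abs_pos.mpr hx) (hu' x)
  have heq : (G.adjMatrix ℝ *ᵥ f) u = μ * f u := by
    rw [hf]; simp
  rw [SimpleGraph.adjMatrix_mulVec_apply] at heq
  have habs : |μ * f u| ≤ (n : ℝ) * |f u| := by
    rw [← heq]
    calc |∑ y ∈ G.neighborFinset u, f y| ≤ ∑ y ∈ G.neighborFinset u, |f y| :=
          Finset.abs_sum_le_sum_abs _ _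
    _ ≤ ∑ _y ∈ G.neighborFinset u, |f u| := Finset.sum_le_sum (fun y _ => hu' y)
    _ = (G.neighborFinset u).card * |f u| := by rw [Finset.sum_const, nsmul_eq_mul]
    _ ≤ (n : ℝ) * |f u| := by
        apply mul_le_mul_of_nonneg_right _ (abs_nonneg _)
        have : (G.neighborFinset u).card ≤ n := by
          simpa using Finset.card_le_card (Finset.subset_univ (G.neighborFinset u))
        exact_mod_cast this
  rw [abs_mul] at habs
  have hμ : |μ| ≤ n := le_of_mul_le_mul_right habs hfu
  exact le_trans (le_abs_self μ) hμ

lemma card_small_eq (n r : ℕ) (hr : r ≤ n) : ((univ : Finset (Fin n)).filter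
    (fun x : Fin n => (x : ℕ) < r)).card = r := by
  have : (univ : Finset (Fin n)).filter (fun x : Fin n => (x : ℕ) < r)
      = (univ : Finset (Fin r)).map (Fin.castLEEmb hr) := by
    ext x
    simp only [Finset.mem_filter, Finset.mem_univ, true_and, Finset.mem_map]
    constructor
    · intro hx
      exact ⟨⟨x, hx⟩, by ext; simp⟩
    · rintro ⟨y, rfl⟩
      simpa using y.isLt
  rw [this, Finset.card_map, Finset.card_univ, Fintype.card_fin]

lemma split_eig (n r : ℕ) (hr3 : 3 ≤ r) (hrn : r + 4 ≤ n) :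
    Real.sqrt ((r : ℝ) * n) ≤ graphSpectralRadius (completeSplitGraph n r) := by
  have hr3' : (3 : ℝ) ≤ (r : ℝ) := by exact_mod_cast hr3
  have hnr : (r : ℝ) + 4 ≤ (n : ℝ) := by exact_mod_cast hrn
  set D : ℝ := ((r : ℝ) - 1)^2 + 4 * r * ((n : ℝ) - r) with hDdef
  have hD0 : 0 ≤ D := by nlinarith
  set s : ℝ := Real.sqrt D with hsdef
  have hs2 : s ^ 2 = D := Real.sq_sqrt hD0
  have hs0 : 0 ≤ s := Real.sqrt_nonneg _
  set μ : ℝ := (((r : ℝ) - 1) + s) / 2 with hμdef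
  have hμeq : μ ^ 2 = ((r : ℝ) - 1) * μ + r * ((n : ℝ) - r) := by
    rw [hμdef, hDdef] at *
    linear_combination (1/4 : ℝ) * hs2
  have hμ0 : 0 ≤ μ := by rw [hμdef]; linarith
  have ha : (r : ℝ)^2 + 2*r - 1 ≤ ((r : ℝ) - 1) * s := by
    by_contra h
    push_neg at h
    have hb : (0 : ℝ) < (r : ℝ)^2 + 2*r - 1 := by nlinarith
    have hprod : (0:ℝ) ≤ ((r:ℝ)-1) * s := mul_nonneg (by linarith) hs0
    have hsq : (((r : ℝ) - 1) * s)^2 < ((r : ℝ)^2 + 2*r - 1)^2 := by nlinarith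
    rw [mul_pow, hs2, hDdef] at hsq
    nlinarith
  have hr2 : (r : ℝ)^2 ≤ ((r : ℝ) - 1) * μ := by
    rw [hμdef]; nlinarith
  have hμ2 : (r : ℝ) * n ≤ μ ^ 2 := by nlinarith [hμeq, hr2]
  -- the eigenvector
  set f : Fin n → ℝ := fun u => if (u : ℕ) < r then μ else (r : ℝ) with hfdef
  have hf0 : f ≠ 0 := by
    intro h
    have hu0 : ((⟨r, by omega⟩ : Fin n) : ℕ) < r ↔ False := by simp
    have := congrFun h (⟨r, by omega⟩ : Fin n)
    rw [hfdef] at this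
    simp only [if_neg (by simp : ¬ ((⟨r, by omega⟩ : Fin n) : ℕ) < r)] at this
    rw [Pi.zero_apply] at this
    linarith
  have e1 : ∑ v ∈ (univ : Finset (Fin n)).filter (fun v : Fin n => (v : ℕ) < r), f v
      = (r : ℝ) * μ := by
    rw [Finset.sum_congr rfl (fun x hx => if_pos (Finset.mem_filter.mp hx).2),
      Finset.sum_const, card_small_eq n r (by omega), nsmul_eq_mul]
  have e2 : ∑ v ∈ (univ : Finset (Fin n)).filter (fun v : Fin n => ¬ (v : ℕ) < r), f v
      = ((n : ℝ) - r) * r := by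
    rw [Finset.sum_congr rfl (fun x hx => if_neg (Finset.mem_filter.mp hx).2),
      Finset.sum_const, nsmul_eq_mul]
    have hc := Finset.card_filter_add_card_filter_not
      (s := (univ : Finset (Fin n))) (p := fun v : Fin n => (v : ℕ) < r)
    rw [card_small_eq n r (by omega), Finset.card_univ, Fintype.card_fin] at hc
    have : ((univ : Finset (Fin n)).filter (fun v : Fin n => ¬ (v : ℕ) < r)).card
        = n - r := by omega
    rw [this]
    have : ((n - r : ℕ) : ℝ) = (n : ℝ) - r := by
      rw [Nat.cast_sub (by omega)]
    rw [this]
  have hsum : ∑ v, f v = (r : ℝ) * μ + ((n : ℝ) - r) * r := by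
    rw [← Finset.sum_filter_add_sum_filter_not univ (fun v : Fin n => (v : ℕ) < r) f,
      e1, e2]
  have heig : (completeSplitGraph n r).adjMatrix ℝ *ᵥ f = μ • f := by
    funext u
    rw [SimpleGraph.adjMatrix_mulVec_apply, Pi.smul_apply, smul_eq_mul]
    by_cases hu : (u : ℕ) < r
    · have hnb : (completeSplitGraph n r).neighborFinset u = univ.erase u := by
        ext x
        simp only [SimpleGraph.mem_neighborFinset, Finset.mem_erase, Finset.mem_univ,
          and_true]
        constructor
        · intro h; exact h.1.symm
        · intro h; exact ⟨h.symm, Or.inl hu⟩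
      rw [hnb, Finset.sum_erase_eq_sub (Finset.mem_univ u), hsum]
      have hfu : f u = μ := if_pos hu
      rw [hfu]
      linear_combination -hμeq
    · have hnb : (completeSplitGraph n r).neighborFinset u
          = (univ : Finset (Fin n)).filter (fun x : Fin n => (x : ℕ) < r) := by
        ext x
        simp only [SimpleGraph.mem_neighborFinset, Finset.mem_filter, Finset.mem_univ,
          true_and]
        constructor
        · rintro ⟨hne, h | h⟩
          · exact absurd h hu
          · exact h
        · intro h
          refine ⟨?_, Or.inr h⟩
          intro heq
          rw [heq] at hu
          exact hu h
      rw [hnb, e1]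
      have hfu : f u = (r : ℝ) := if_neg hu
      rw [hfu]
      ring
  have hmem : μ ≤ graphSpectralRadius (completeSplitGraph n r) :=
    le_csSup (eig_bdd n _) ⟨f, hf0, heig⟩
  calc Real.sqrt ((r : ℝ) * n) ≤ Real.sqrt (μ ^ 2) := Real.sqrt_le_sqrt hμ2
  _ = μ := by rw [Real.sqrt_sq hμ0]
  _ ≤ _ := hmem

theorem stmt5 (k n : ℕ) (hk : 2 ≤ k) (hn : 2 * k + 3 ≤ n)
    (G : SimpleGraph (Fin n)) [DecidableRel G.Adj]
    (hG : ¬ HasNDisjointCycles G k)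
    (hmax : ∀ (H : SimpleGraph (Fin n)) [DecidableRel H.Adj],
      ¬ HasNDisjointCycles H k → graphSpectralRadius H ≤ graphSpectralRadius G)
    (ρ : ℝ) (hρ : ρ = graphSpectralRadius G) :
    Real.sqrt ((2 * (k : ℝ) - 1) * n) ≤ ρ := by
  have hk1 : 1 ≤ k := by omega
  have hr3 : 3 ≤ 2 * k - 1 := by omega
  have hrn : (2 * k - 1) + 4 ≤ n := by omega
  have h1 := split_eig n (2 * k - 1) hr3 hrn
  have h2 := hmax (completeSplitGraph n (2 * k - 1)) (split_no_cycles n k hk1)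
  have hcast : (2 * (k : ℝ) - 1) = ((2 * k - 1 : ℕ) : ℝ) := by
    rw [Nat.cast_sub (by omega : 1 ≤ 2 * k)]
    push_cast
    ring
  rw [hρ, hcast]
  exact le_trans h1 h2
end
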